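/- Non-abelian averaged one-point-to-two-point inequality: let ρ be a density matrix on a finite-dimensional complex space, Ω a nonempty finite index set, n ≥ 1, and for each x ∈ Ω let (O_x^{(α)})_{α ∈ Fin n} be matrices of the same size as ρ. Define O_{xy} := (1/n) Σ_α O_x^{(α)} (O_y^{(α)})†. Then for every vector v ∈ ℂⁿ with Σ_α |v_α|² = 1, Σ_{x,y ∈ Ω} F(ρ, O_{xy} ρ O_{xy}†) ≥ (1/n) · ( Σ_{x ∈ Ω} F(ρ, (Σ_α v_α O_x^{(α)}) ρ (Σ_α v_α O_x^{(α)})†) )². -/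

import Mathlib

noncomputable section

open scoped Matrix Kronecker ComplexOrder

/-- The positive semidefinite square root of a matrix (defaults to `0` if not PSD). -/
noncomputable def matSqrt {n : Type*} [Fintype n] [DecidableEq n] (M : Matrix n n ℂ) :
    Matrix n n ℂ :=
  open scoped Classical in
  if h : M.PosSemidef then
    (h.1.eigenvectorUnitary : Matrix n n ℂ) *
      Matrix.diagonal (fun i => ((Real.sqrt (h.1.eigenvalues i) : ℝ) : ℂ)) *
      (star h.1.eigenvectorUnitary : Matrix n n ℂ)
  else 0

/-- The fidelity `F(ρ, σ) = tr √(√ρ σ √ρ)` of two PSD matrices. -/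
noncomputable def fidelity {n : Type*} [Fintype n] [DecidableEq n] (ρ σ : Matrix n n ℂ) : ℝ :=
  (matSqrt (matSqrt ρ * σ * matSqrt ρ)).trace.re

/-- The ℓ²→ℓ² operator norm of a complex matrix. -/
noncomputable def opNorm {m n : Type*} [Fintype m] [Fintype n] [DecidableEq n]
    (M : Matrix m n ℂ) : ℝ :=
  ‖(Matrix.toEuclideanLin.trans LinearMap.toContinuousLinearMap) M‖

/-- Partial trace over the second tensor factor. -/
noncomputable def ptraceB {A B : Type*} [Fintype B]
    (ρ : Matrix (A × B) (A × B) ℂ) : Matrix A A ℂ :=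
  Matrix.of fun a a' => ∑ b : B, ρ (a, b) (a', b)

open scoped MatrixOrder

namespace NAOPTP

set_option linter.unusedSectionVars false
set_option linter.unusedVariables false

open Matrix Complex

variable {d : Type*} [Fintype d]

/-- squared ℓ² norm of a complex vector -/
noncomputable def dsq (w : d → ℂ) : ℝ := (star w ⬝ᵥ w).re

lemma dsq_eq (w : d → ℂ) : dsq w = ∑ i, ‖w i‖ ^ 2 := by
  unfold dsq dotProduct
  rw [Complex.re_sum]
  congr 1 with i
  simp only [Pi.star_apply, Complex.star_def, Complex.mul_re, Complex.conj_re, Complex.conj_im]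
  rw [Complex.sq_norm, Complex.normSq_apply]
  ring

lemma dsq_nonneg (w : d → ℂ) : 0 ≤ dsq w := by
  rw [dsq_eq]; positivity

lemma dot_abs_le (u w : d → ℂ) :
    ‖star u ⬝ᵥ w‖ ≤ Real.sqrt (dsq u) * Real.sqrt (dsq w) := by
  have h := norm_inner_le_norm (𝕜 := ℂ) (E := EuclideanSpace ℂ d)
    ((WithLp.equiv 2 _).symm u) ((WithLp.equiv 2 _).symm w)
  have hi : inner ℂ ((WithLp.equiv 2 (d → ℂ)).symm u) ((WithLp.equiv 2 (d → ℂ)).symm w)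
      = star u ⬝ᵥ w := by rw [dotProduct_comm]; rfl
  rw [hi] at h
  have hn : ∀ x : d → ℂ, ‖(WithLp.equiv 2 (d → ℂ)).symm x‖ = Real.sqrt (dsq x) := by
    intro x
    rw [EuclideanSpace.norm_eq, dsq_eq]
    rfl
  rwa [hn, hn] at h

/-- `A` is an ℓ²-contraction. -/
def IsContr (A : Matrix d d ℂ) : Prop := ∀ w, dsq (A *ᵥ w) ≤ dsq w

lemma dsq_mulVec (A : Matrix d d ℂ) (w : d → ℂ) :
    dsq (A *ᵥ w) = (star w ⬝ᵥ (Aᴴ * A) *ᵥ w).re := by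
  unfold dsq
  rw [star_mulVec, ← Matrix.dotProduct_mulVec, Matrix.mulVec_mulVec]

lemma IsContr.ct {A : Matrix d d ℂ} (hA : IsContr A) : IsContr Aᴴ := by
  intro u
  have h0 : dsq (Aᴴ *ᵥ u) = (star u ⬝ᵥ A *ᵥ (Aᴴ *ᵥ u)).re := by
    unfold dsq
    rw [star_mulVec, conjTranspose_conjTranspose, ← Matrix.dotProduct_mulVec]
  have h1 : (star u ⬝ᵥ A *ᵥ (Aᴴ *ᵥ u)).re ≤ ‖star u ⬝ᵥ A *ᵥ (Aᴴ *ᵥ u)‖ :=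
    Complex.re_le_norm _
  have h2 := dot_abs_le u (A *ᵥ (Aᴴ *ᵥ u))
  have h3 : Real.sqrt (dsq (A *ᵥ (Aᴴ *ᵥ u))) ≤ Real.sqrt (dsq (Aᴴ *ᵥ u)) :=
    Real.sqrt_le_sqrt (hA _)
  have h4 : dsq (Aᴴ *ᵥ u) ≤ Real.sqrt (dsq u) * Real.sqrt (dsq (Aᴴ *ᵥ u)) := by
    calc dsq (Aᴴ *ᵥ u) ≤ ‖star u ⬝ᵥ A *ᵥ (Aᴴ *ᵥ u)‖ := h0 ▸ h1
      _ ≤ Real.sqrt (dsq u) * Real.sqrt (dsq (A *ᵥ (Aᴴ *ᵥ u))) := h2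
      _ ≤ Real.sqrt (dsq u) * Real.sqrt (dsq (Aᴴ *ᵥ u)) :=
        mul_le_mul_of_nonneg_left h3 (Real.sqrt_nonneg _)
  have ha := dsq_nonneg (Aᴴ *ᵥ u)
  have hb := dsq_nonneg u
  nlinarith [Real.sq_sqrt ha, Real.sq_sqrt hb, Real.sqrt_nonneg (dsq (Aᴴ *ᵥ u)),
    Real.sqrt_nonneg (dsq u), sq_nonneg (Real.sqrt (dsq (Aᴴ *ᵥ u)) - Real.sqrt (dsq u))]

lemma IsContr.mul {A B : Matrix d d ℂ} (hA : IsContr A) (hB : IsContr B) :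
    IsContr (A * B) := by
  intro w
  rw [← Matrix.mulVec_mulVec]
  exact (hA _).trans (hB w)

lemma trace_ctmul_re {a b : Type*} [Fintype a] [Fintype b] (A : Matrix a b ℂ) :
    (Matrix.trace (Aᴴ * A)).re = ∑ j, ∑ i, ‖A i j‖ ^ 2 := by
  unfold Matrix.trace Matrix.diag
  rw [Complex.re_sum]
  congr 1 with j
  rw [Matrix.mul_apply, Complex.re_sum]
  congr 1 with i
  simp only [Matrix.conjTranspose_apply, Complex.star_def, Complex.mul_re,
    Complex.conj_re, Complex.conj_im]
  rw [Complex.sq_norm, Complex.normSq_apply]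
  ring

lemma trace_cs {a b : Type*} [Fintype a] [Fintype b] (A : Matrix a b ℂ) (B : Matrix b a ℂ) :
    ‖Matrix.trace (A * B)‖
      ≤ Real.sqrt ((Matrix.trace (Aᴴ * A)).re) * Real.sqrt ((Matrix.trace (Bᴴ * B)).re) := by
  set u : a × b → ℂ := fun p => star (A p.1 p.2) with hu
  set w : a × b → ℂ := fun p => B p.2 p.1 with hw
  have h1 : Matrix.trace (A * B) = star u ⬝ᵥ w := by
    unfold Matrix.trace Matrix.diag dotProduct
    rw [Fintype.sum_prod_type]
    congr 1 with i
    rw [Matrix.mul_apply]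
    congr 1 with j
    simp [hu, hw]
  have h2 : dsq u = (Matrix.trace (Aᴴ * A)).re := by
    rw [dsq_eq, trace_ctmul_re, Fintype.sum_prod_type, Finset.sum_comm]
    try simp [hu]
  have h3 : dsq w = (Matrix.trace (Bᴴ * B)).re := by
    rw [dsq_eq, trace_ctmul_re, Fintype.sum_prod_type]
    try simp [hw]
  rw [h1, ← h2, ← h3]
  exact dot_abs_le u w

variable [DecidableEq d]

lemma quad_UDU (U : Matrix d d ℂ) (hU2 : U * Uᴴ = 1) (e : d → ℝ)
    (he0 : ∀ i, 0 ≤ e i) (he1 : ∀ i, e i ≤ 1) (w : d → ℂ) :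
    (star w ⬝ᵥ (U * diagonal (fun i => (e i : ℂ)) * Uᴴ) *ᵥ w).re ≤ dsq w := by
  have hsz : star (Uᴴ *ᵥ w) = star w ᵥ* U := by
    rw [star_mulVec, conjTranspose_conjTranspose]
  have h1 : star w ⬝ᵥ (U * diagonal (fun i => (e i : ℂ)) * Uᴴ) *ᵥ w
      = star (Uᴴ *ᵥ w) ⬝ᵥ diagonal (fun i => (e i : ℂ)) *ᵥ (Uᴴ *ᵥ w) := by
    rw [← Matrix.mulVec_mulVec, ← Matrix.mulVec_mulVec, Matrix.dotProduct_mulVec, ← hsz,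
      Matrix.dotProduct_mulVec]
  have hzz : dsq (Uᴴ *ᵥ w) = dsq w := by
    unfold dsq
    rw [hsz, ← Matrix.dotProduct_mulVec, Matrix.mulVec_mulVec, hU2, Matrix.one_mulVec]
  set z := Uᴴ *ᵥ w with hz
  have h2 : (star z ⬝ᵥ diagonal (fun i => (e i : ℂ)) *ᵥ z).re = ∑ i, e i * ‖z i‖ ^ 2 := by
    unfold dotProduct
    rw [Complex.re_sum]
    congr 1 with i
    rw [Matrix.mulVec_diagonal]
    simp only [Pi.star_apply, Complex.star_def, Complex.mul_re, Complex.mul_im,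
      Complex.conj_re, Complex.conj_im, Complex.ofReal_re, Complex.ofReal_im]
    rw [Complex.sq_norm, Complex.normSq_apply]
    ring
  rw [h1, h2, ← hzz, dsq_eq]
  refine Finset.sum_le_sum fun i _ => ?_
  exact mul_le_of_le_one_left (by positivity) (he1 i)

lemma diag_bound (U : Matrix d d ℂ) (hU1 : Uᴴ * U = 1) {Y : Matrix d d ℂ}
    (hY : IsContr Y) (i : d) : ‖(Uᴴ * Y * U) i i‖ ≤ 1 := by
  set u : d → ℂ := fun j => U j i with hu
  have hval : (Uᴴ * Y * U) i i = star u ⬝ᵥ Y *ᵥ u := by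
    simp only [Matrix.mul_apply, dotProduct, Matrix.mulVec, Matrix.conjTranspose_apply,
      Pi.star_apply, hu, Finset.sum_mul, Finset.mul_sum]
    rw [Finset.sum_comm]
    simp [mul_assoc]
  have hun : dsq u = 1 := by
    have h : star u ⬝ᵥ u = (Uᴴ * U) i i := by
      simp [Matrix.mul_apply, dotProduct, Matrix.conjTranspose_apply, hu]
    unfold dsq
    rw [h, hU1]
    simp
  have h3 : ‖star u ⬝ᵥ Y *ᵥ u‖ ≤ 1 := by
    refine (dot_abs_le _ _).trans ?_
    have h4 : Real.sqrt (dsq u) = 1 := by rw [hun, Real.sqrt_one]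
    have h5 : Real.sqrt (dsq (Y *ᵥ u)) ≤ 1 := by
      rw [← Real.sqrt_one]
      exact Real.sqrt_le_sqrt ((hY u).trans (le_of_eq hun))
    calc Real.sqrt (dsq u) * Real.sqrt (dsq (Y *ᵥ u)) ≤ 1 * 1 := by
          rw [h4]; exact mul_le_mul_of_nonneg_left h5 zero_le_one
      _ = 1 := by ring
  rw [hval]; exact h3

lemma trace_mul_diagonal (Y : Matrix d d ℂ) (c : d → ℂ) :
    Matrix.trace (Y * diagonal c) = ∑ i, Y i i * c i := by
  simp [Matrix.trace, Matrix.diag, Matrix.mul_apply, Matrix.diagonal_apply, mul_ite,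
    Finset.sum_ite_eq]

lemma matSqrt_eq {M : Matrix d d ℂ} (h : M.PosSemidef) : matSqrt M = CFC.sqrt M := by
  rw [CFC.sqrt_eq_real_sqrt M h.nonneg, cfcₙ_eq_cfc, h.1.cfc_eq, Matrix.IsHermitian.cfc,
    Unitary.conjStarAlgAut_apply]
  unfold matSqrt
  rw [dif_pos h]
  rfl

/-- trace norm of a square complex matrix -/
noncomputable def tnorm (M : Matrix d d ℂ) : ℝ := (matSqrt (M * Mᴴ)).trace.re

lemma tnorm_key (M : Matrix d d ℂ) :
    ∃ C : Matrix d d ℂ, IsContr C ∧ IsContr Cᴴ ∧ (Matrix.trace (C * M)).re = tnorm M ∧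
      ∀ B : Matrix d d ℂ, IsContr B → (Matrix.trace (B * M)).re ≤ tnorm M := by
  have hP : (M * Mᴴ).PosSemidef := Matrix.posSemidef_self_mul_conjTranspose M
  set hE := hP.1 with hEdef
  set U : Matrix d d ℂ := (hE.eigenvectorUnitary : Matrix d d ℂ) with hU
  have hU1 : Uᴴ * U = 1 := by
    rw [← Matrix.star_eq_conjTranspose]
    exact Matrix.mem_unitaryGroup_iff'.mp hE.eigenvectorUnitary.2
  have hU2 : U * Uᴴ = 1 := by
    rw [← Matrix.star_eq_conjTranspose]
    exact Matrix.mem_unitaryGroup_iff.mp hE.eigenvectorUnitary.2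
  set lam := hE.eigenvalues with hlamdef
  have hlam : ∀ i, 0 ≤ lam i := hP.eigenvalues_nonneg
  set Dc : (d → ℝ) → Matrix d d ℂ := fun g => U * diagonal (fun i => (g i : ℂ)) * Uᴴ with hDc
  have hDmul : ∀ g g' : d → ℝ, Dc g * Dc g' = Dc (fun i => g i * g' i) := by
    intro g g'
    simp only [hDc]
    simp only [Matrix.mul_assoc]
    rw [← Matrix.mul_assoc Uᴴ U, hU1, Matrix.one_mul, ← Matrix.mul_assoc (diagonal _),
      Matrix.diagonal_mul_diagonal]
    norm_cast
  have hDct : ∀ g, (Dc g)ᴴ = Dc g := by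
    intro g
    have hstar : (star fun i => ((g i : ℝ) : ℂ)) = fun i => ((g i : ℝ) : ℂ) := by
      funext i
      simp [Complex.conj_ofReal]
    simp only [hDc, Matrix.conjTranspose_mul, Matrix.conjTranspose_conjTranspose,
      Matrix.diagonal_conjTranspose, hstar, Matrix.mul_assoc]
  have hDtr : ∀ g, Matrix.trace (Dc g) = ((∑ i, g i : ℝ) : ℂ) := by
    intro g
    simp only [hDc]
    rw [Matrix.trace_mul_cycle, hU1, Matrix.one_mul, Matrix.trace_diagonal]
    push_cast
    rfl
  have hPspec : M * Mᴴ = Dc lam := by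
    simp only [hDc]
    convert hE.spectral_theorem using 2
    rw [Unitary.conjStarAlgAut_apply]
    rfl
  set f : d → ℝ := fun i => Real.sqrt (lam i) with hf
  have hSq : matSqrt (M * Mᴴ) = Dc f := by
    unfold matSqrt
    rw [dif_pos hP]
    rfl
  have htn : tnorm M = ∑ i, f i := by
    rw [tnorm, hSq, hDtr]
    exact Complex.ofReal_re _
  set ind : d → ℝ := fun i => if lam i = 0 then 0 else 1 with hind
  have hind0 : ∀ i, 0 ≤ ind i := by
    intro i; simp only [hind]; split <;> norm_num
  have hind1 : ∀ i, ind i ≤ 1 := by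
    intro i; simp only [hind]; split <;> norm_num
  have hfne : ∀ i, lam i ≠ 0 → f i ≠ 0 := by
    intro i h
    simp only [hf]
    exact Real.sqrt_ne_zero'.mpr (lt_of_le_of_ne (hlam i) (Ne.symm h))
  have hfind : (fun i => f i * (f i)⁻¹) = ind := by
    funext i
    by_cases h : lam i = 0
    · simp [hind, hf, h]
    · rw [hind]
      simp only [if_neg h]
      exact mul_inv_cancel₀ (hfne i h)
  set Phi := Dc (fun i => (f i)⁻¹) with hPhi
  have hPi : Dc f * Phi = Dc ind := by
    rw [hPhi, hDmul, hfind]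
  have hindmul : Dc ind * Dc ind = Dc ind := by
    have h : (fun i => ind i * ind i) = ind := by
      funext i
      by_cases h : lam i = 0 <;> simp [hind, h]
    rw [hDmul, h]
  have hindlam : Dc ind * Dc lam = Dc lam := by
    have h : (fun i => ind i * lam i) = lam := by
      funext i
      by_cases h : lam i = 0 <;> simp [hind, h]
    rw [hDmul, h]
  have hlamind : Dc lam * Dc ind = Dc lam := by
    have h : (fun i => lam i * ind i) = lam := by
      funext i
      by_cases h : lam i = 0 <;> simp [hind, h]
    rw [hDmul, h]
  have hPiM : Dc ind * M = M := by
    set Z := Dc ind * M - M with hZ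
    have hZtr : Matrix.trace (Z * Zᴴ) = 0 := by
      rw [hZ, Matrix.conjTranspose_sub, Matrix.conjTranspose_mul, hDct, Matrix.sub_mul,
        Matrix.mul_sub, Matrix.mul_sub, Matrix.trace_sub, Matrix.trace_sub, Matrix.trace_sub]
      have e1 : Dc ind * M * (Mᴴ * Dc ind) = Dc ind * (M * Mᴴ) * Dc ind := by
        simp only [Matrix.mul_assoc]
      have e2 : M * (Mᴴ * Dc ind) = (M * Mᴴ) * Dc ind := by
        simp only [Matrix.mul_assoc]
      have e3 : Dc ind * M * Mᴴ = Dc ind * (M * Mᴴ) := by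
        simp only [Matrix.mul_assoc]
      rw [e1, e2, e3, hPspec]
      rw [Matrix.trace_mul_cycle (Dc ind) (Dc lam) (Dc ind), hindmul, hindlam, hlamind]
      ring
    have hZ0 : Z = 0 := by
      have h0 : (Matrix.trace (Zᴴ * Z)).re = ∑ j, ∑ i, ‖Z i j‖ ^ 2 := trace_ctmul_re Z
      rw [← Matrix.trace_mul_comm, hZtr] at h0
      have hz : ∀ j ∈ Finset.univ, ∀ i ∈ Finset.univ, ‖Z i j‖ ^ 2 = 0 := by
        intro j _
        have hsum := (Finset.sum_eq_zero_iff_of_nonneg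
          (fun j _ => Finset.sum_nonneg fun i _ => by positivity)).mp h0.symm j
          (Finset.mem_univ j)
        intro i hi
        exact (Finset.sum_eq_zero_iff_of_nonneg fun i _ => by positivity).mp hsum i hi
      ext i j
      have := hz j (Finset.mem_univ j) i (Finset.mem_univ i)
      simpa using this
    have := sub_eq_zero.mp hZ0
    exact this
  set R := Phi * M with hR
  have hSR : Dc f * R = M := by
    rw [hR, ← Matrix.mul_assoc, hPi, hPiM]
  have hRct : Rᴴ = Mᴴ * Phi := by
    rw [hR, Matrix.conjTranspose_mul, hPhi, hDct]
  have hRR : R * Rᴴ = Dc ind := by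
    rw [hRct, hR]
    have e1 : Phi * M * (Mᴴ * Phi) = Phi * (M * Mᴴ) * Phi := by
      simp only [Matrix.mul_assoc]
    have h : (fun i => (fun i => (f i)⁻¹ * lam i) i * (f i)⁻¹) = ind := by
      funext i
      by_cases h : lam i = 0
      · simp [hind, hf, h]
      · rw [hind]
        simp only [if_neg h]
        have h2 : lam i = f i * f i := (Real.mul_self_sqrt (hlam i)).symm
        rw [h2]
        field_simp
        exact div_self (hfne i h)
    rw [e1, hPspec, hPhi, hDmul, hDmul, h]
  have hRHct : IsContr Rᴴ := by
    intro w
    rw [dsq_mulVec, conjTranspose_conjTranspose, hRR]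
    simp only [hDc]
    exact quad_UDU U hU2 ind hind0 hind1 w
  have hRc : IsContr R := by
    have := hRHct.ct
    rwa [conjTranspose_conjTranspose] at this
  refine ⟨Rᴴ, hRHct, by rwa [conjTranspose_conjTranspose], ?_, ?_⟩
  · rw [hRct]
    have e1 : Matrix.trace (Mᴴ * Phi * M) = Matrix.trace (M * Mᴴ * Phi) :=
      Matrix.trace_mul_cycle Mᴴ Phi M
    have e2 : Matrix.trace (M * Mᴴ * Phi) = Matrix.trace (Phi * (M * Mᴴ)) :=
      Matrix.trace_mul_comm _ _
    have h : (fun i => (f i)⁻¹ * lam i) = f := by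
      funext i
      by_cases h : lam i = 0
      · simp [hf, h]
      · have h2 : lam i = f i * f i := (Real.mul_self_sqrt (hlam i)).symm
        rw [h2]
        field_simp
    rw [e1, e2, hPspec, hPhi, hDmul, h, hDtr, htn]
    exact Complex.ofReal_re _
  · intro B hB
    have hTr : Matrix.trace (B * M)
        = Matrix.trace ((Uᴴ * (R * B) * U) * diagonal (fun i => ((f i : ℝ) : ℂ))) := by
      conv_lhs => rw [← hSR]
      rw [show B * (Dc f * R) = (B * Dc f) * R from (Matrix.mul_assoc _ _ _).symm]
      rw [Matrix.trace_mul_comm]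
      rw [show R * (B * Dc f) = (R * B) * Dc f from (Matrix.mul_assoc _ _ _).symm]
      simp only [hDc]
      rw [show (R * B) * ((U * diagonal fun i => ((f i : ℝ) : ℂ)) * Uᴴ)
          = ((R * B) * (U * diagonal fun i => ((f i : ℝ) : ℂ))) * Uᴴ from by
        simp only [Matrix.mul_assoc]]
      rw [Matrix.trace_mul_comm]
      rw [show Uᴴ * ((R * B) * (U * diagonal fun i => ((f i : ℝ) : ℂ)))
          = (Uᴴ * (R * B) * U) * diagonal (fun i => ((f i : ℝ) : ℂ)) from by
        simp only [Matrix.mul_assoc]]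
    rw [hTr, trace_mul_diagonal, htn, Complex.re_sum]
    refine Finset.sum_le_sum fun i _ => ?_
    have hY : IsContr (R * B) := hRc.mul hB
    have hd := diag_bound U hU1 hY i
    have hf0 : 0 ≤ f i := Real.sqrt_nonneg _
    have hre : ((Uᴴ * (R * B) * U) i i * ((f i : ℝ) : ℂ)).re
        = ((Uᴴ * (R * B) * U) i i).re * f i := by
      simp [Complex.mul_re]
    rw [hre]
    calc ((Uᴴ * (R * B) * U) i i).re * f i ≤ ‖(Uᴴ * (R * B) * U) i i‖ * f i :=
          mul_le_mul_of_nonneg_right (Complex.re_le_norm _) hf0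
      _ ≤ 1 * f i := mul_le_mul_of_nonneg_right hd hf0
      _ = f i := one_mul _

lemma posSemidef_ofReal_smul {S : Matrix d d ℂ} (hS : S.PosSemidef) {c : ℝ} (hc : 0 ≤ c) :
    ((c : ℂ) • S).PosSemidef := by
  exact hS.smul (Complex.zero_le_real.mpr hc)

lemma tnorm_smul (c : ℝ) (hc : 0 ≤ c) (M : Matrix d d ℂ) :
    tnorm ((c : ℂ) • M) = c * tnorm M := by
  have hP : (M * Mᴴ).PosSemidef := Matrix.posSemidef_self_mul_conjTranspose M
  have h1 : ((c : ℂ) • M) * ((c : ℂ) • M)ᴴ = ((c ^ 2 : ℝ) : ℂ) • (M * Mᴴ) := by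
    rw [Matrix.conjTranspose_smul, Complex.star_def, Complex.conj_ofReal,
      Matrix.smul_mul, Matrix.mul_smul, smul_smul]
    congr 1
    push_cast
    ring
  have hP2 : (((c ^ 2 : ℝ) : ℂ) • (M * Mᴴ)).PosSemidef :=
    posSemidef_ofReal_smul hP (sq_nonneg c)
  have hsmul_psd : ((c : ℂ) • CFC.sqrt (M * Mᴴ)).PosSemidef :=
    posSemidef_ofReal_smul (CFC.sqrt_nonneg (M * Mᴴ)).posSemidef hc
  have hsq : ((c : ℂ) • CFC.sqrt (M * Mᴴ)) ^ 2 = ((c ^ 2 : ℝ) : ℂ) • (M * Mᴴ) := by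
    rw [pow_two, Matrix.smul_mul, Matrix.mul_smul, smul_smul, CFC.sqrt_mul_sqrt_self _ hP.nonneg]
    congr 1
    push_cast
    ring
  have heq := (CFC.sqrt_unique (a := ((c ^ 2 : ℝ) : ℂ) • (M * Mᴴ)) (by rw [← pow_two]; exact hsq) hsmul_psd.nonneg).symm
  rw [tnorm, h1, matSqrt_eq hP2, ← heq, Matrix.trace_smul, tnorm, matSqrt_eq hP]
  simp [smul_eq_mul, Complex.mul_re]

lemma fid_eq {ρ : Matrix d d ℂ} (hρ : ρ.PosSemidef) (A : Matrix d d ℂ) :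
    fidelity ρ (A * ρ * Aᴴ) = tnorm (matSqrt ρ * A * matSqrt ρ) := by
  have hr1 : matSqrt ρ * matSqrt ρ = ρ := by
    rw [matSqrt_eq hρ]; exact CFC.sqrt_mul_sqrt_self _ hρ.nonneg
  have hrh : (matSqrt ρ)ᴴ = matSqrt ρ := by
    rw [matSqrt_eq hρ]; exact (CFC.sqrt_nonneg ρ).posSemidef.1
  unfold fidelity tnorm
  set r := matSqrt ρ with hr
  congr 3
  rw [Matrix.conjTranspose_mul, Matrix.conjTranspose_mul, hrh, ← hr1]
  simp only [Matrix.mul_assoc]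

end NAOPTP

open NAOPTP in
/-- **Non-abelian averaged one-point-to-two-point inequality** (Theorem 13):
`Σ_{x,y} F(ρ, O_{xy} ρ O_{xy}†) ≥ (1/n) (Σ_x F(ρ, (v·O_x) ρ (v·O_x)†))²` for every unit
vector `v ∈ ℂⁿ`, where `O_{xy} = (1/n) Σ_α O_x^{(α)} (O_y^{(α)})†`. -/
theorem nonabelian_avg_one_point_two_point
    {m : Type*} [Fintype m] [DecidableEq m]
    (ρ : Matrix m m ℂ) (hρ : ρ.PosSemidef) (hρtr : ρ.trace = 1)
    {Ω : Type*} [Fintype Ω] [Nonempty Ω]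
    (n : ℕ) (hn : 1 ≤ n) (O : Ω → Fin n → Matrix m m ℂ)
    (Opair : Ω → Ω → Matrix m m ℂ)
    (hOpair : ∀ x y, Opair x y = ((n : ℂ))⁻¹ • ∑ α : Fin n, O x α * (O y α)ᴴ)
    (v : Fin n → ℂ) (hv : ∑ α, ‖v α‖ ^ 2 = 1) :
    ((1 : ℝ) / n) *
        (∑ x : Ω, fidelity ρ ((∑ α, v α • O x α) * ρ * (∑ α, v α • O x α)ᴴ)) ^ 2 ≤
      ∑ x : Ω, ∑ y : Ω, fidelity ρ (Opair x y * ρ * (Opair x y)ᴴ) := by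
  classical
  have hn0 : (0 : ℝ) < n := by exact_mod_cast Nat.lt_of_lt_of_le Nat.zero_lt_one hn
  set r := matSqrt ρ with hr
  have hr1 : r * r = ρ := by rw [hr, matSqrt_eq hρ]; exact CFC.sqrt_mul_sqrt_self _ hρ.nonneg
  have hrh : rᴴ = r := by rw [hr, matSqrt_eq hρ]; exact (Matrix.nonneg_iff_posSemidef.mp (CFC.sqrt_nonneg ρ)).1
  set K : Ω → Matrix m (m × Fin n) ℂ :=
    fun x => Matrix.of fun i p => (r * O x p.2) i p.1 with hK
  set V : Matrix (m × Fin n) m ℂ := Matrix.of fun p j => v p.2 * r p.1 j with hV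
  -- the one-point operators
  have hKV : ∀ x, K x * V = r * (∑ α, v α • O x α) * r := by
    intro x
    have hexp : r * (∑ α, v α • O x α) * r = ∑ α, v α • (r * O x α * r) := by
      rw [Matrix.mul_sum, Matrix.sum_mul]
      exact Finset.sum_congr rfl fun α _ => by rw [Matrix.mul_smul, Matrix.smul_mul]
    rw [hexp]
    ext i j
    rw [Matrix.mul_apply, Fintype.sum_prod_type, Finset.sum_comm]
    rw [Matrix.sum_apply]
    refine Finset.sum_congr rfl fun α _ => ?_
    simp only [Matrix.smul_apply, smul_eq_mul, Matrix.mul_apply, Matrix.of_apply, hK, hV,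
      Finset.mul_sum]
    exact Finset.sum_congr rfl fun k _ => by ring
  -- the two-point operators
  have hKK : ∀ x y, K x * (K y)ᴴ = r * (∑ α, O x α * (O y α)ᴴ) * r := by
    intro x y
    have hexp : r * (∑ α, O x α * (O y α)ᴴ) * r = ∑ α, (r * O x α) * (r * O y α)ᴴ := by
      rw [Matrix.mul_sum, Matrix.sum_mul]
      refine Finset.sum_congr rfl fun α _ => ?_
      rw [Matrix.conjTranspose_mul, hrh]
      simp only [Matrix.mul_assoc]
    rw [hexp]
    ext i j
    rw [Matrix.mul_apply, Fintype.sum_prod_type, Finset.sum_comm]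
    rw [Matrix.sum_apply]
    refine Finset.sum_congr rfl fun α _ => ?_
    rw [Matrix.mul_apply]
    refine Finset.sum_congr rfl fun k _ => ?_
    simp only [Matrix.conjTranspose_apply, Matrix.of_apply, hK]
  have hOpr : ∀ x y, r * Opair x y * r = (((n : ℝ)⁻¹ : ℝ) : ℂ) • (K x * (K y)ᴴ) := by
    intro x y
    rw [hOpair x y, Matrix.mul_smul, Matrix.smul_mul, hKK]
    congr 1
    push_cast
    rfl
  -- fidelity identities
  have hfid1 : ∀ x, fidelity ρ ((∑ α, v α • O x α) * ρ * (∑ α, v α • O x α)ᴴ)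
      = tnorm (K x * V) := by
    intro x
    rw [fid_eq hρ, ← hr, hKV x]
  have hfid2 : ∀ x y, fidelity ρ (Opair x y * ρ * (Opair x y)ᴴ)
      = (n : ℝ)⁻¹ * tnorm (K x * (K y)ᴴ) := by
    intro x y
    rw [fid_eq hρ, ← hr, hOpr x y, tnorm_smul _ (inv_nonneg.mpr hn0.le)]
  -- normalization of V
  have hVV : Matrix.trace (Vᴴ * V) = 1 := by
    have hv1 : (∑ α, (starRingEnd ℂ) (v α) * v α) = 1 := by
      have h : ∀ α, (starRingEnd ℂ) (v α) * v α = ((‖v α‖ ^ 2 : ℝ) : ℂ) := by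
        intro α
        rw [mul_comm, Complex.mul_conj]
        rw [Complex.normSq_eq_norm_sq]
      simp_rw [h]
      rw [← Complex.ofReal_sum, hv]
      norm_num
    have hrc : ∀ k i, (starRingEnd ℂ) (r k i) = r i k := by
      intro k i
      have h := congrFun (congrFun hrh i) k
      simpa [Matrix.conjTranspose_apply] using h
    have hVVρ : Vᴴ * V = ρ := by
      ext i j
      rw [Matrix.mul_apply, Fintype.sum_prod_type, ← hr1, Matrix.mul_apply]
      refine Finset.sum_congr rfl fun k _ => ?_
      have hterm : ∀ α : Fin n, (Vᴴ) i (k, α) * V (k, α) j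
          = ((starRingEnd ℂ) (v α) * v α) * ((starRingEnd ℂ) (r k i) * r k j) := by
        intro α
        simp only [Matrix.conjTranspose_apply, Matrix.of_apply, hV, Complex.star_def, map_mul]
        ring
      rw [Finset.sum_congr rfl fun α _ => hterm α, ← Finset.sum_mul, hv1, one_mul, hrc]
    rw [hVVρ, hρtr]
  -- choose the optimal contractions
  choose C hC using fun x => tnorm_key (K x * V)
  set T : Matrix m (m × Fin n) ℂ := ∑ x, C x * K x with hT
  have hS0 : ∑ x, tnorm (K x * V) = (Matrix.trace (T * V)).re := by
    rw [hT, Matrix.sum_mul, Matrix.trace_sum, Complex.re_sum]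
    refine Finset.sum_congr rfl fun x _ => ?_
    rw [← (hC x).2.2.1, Matrix.mul_assoc]
  have hTTnn : 0 ≤ (Matrix.trace (Tᴴ * T)).re := by
    rw [trace_ctmul_re]
    positivity
  have hVVnn : 0 ≤ (Matrix.trace (Vᴴ * V)).re := by
    rw [trace_ctmul_re]
    positivity
  have hTsum : (∑ x, tnorm (K x * V)) ^ 2 ≤ (Matrix.trace (Tᴴ * T)).re := by
    have hcs := trace_cs T V
    have habs := Complex.abs_re_le_norm (Matrix.trace (T * V))
    calc (∑ x, tnorm (K x * V)) ^ 2 = ((Matrix.trace (T * V)).re) ^ 2 := by rw [hS0]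
      _ ≤ ‖Matrix.trace (T * V)‖ ^ 2 := by
          have := abs_le.mp (le_of_eq (rfl : |(Matrix.trace (T * V)).re| = _))
          nlinarith [Complex.abs_re_le_norm (Matrix.trace (T * V)),
            abs_nonneg ((Matrix.trace (T * V)).re), sq_abs ((Matrix.trace (T * V)).re),
            norm_nonneg (Matrix.trace (T * V))]
      _ ≤ (Real.sqrt ((Matrix.trace (Tᴴ * T)).re) * Real.sqrt ((Matrix.trace (Vᴴ * V)).re)) ^ 2 :=
          pow_le_pow_left₀ (norm_nonneg _) hcs 2
      _ = (Matrix.trace (Tᴴ * T)).re * (Matrix.trace (Vᴴ * V)).re := by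
          rw [mul_pow, Real.sq_sqrt hTTnn, Real.sq_sqrt hVVnn]
      _ = (Matrix.trace (Tᴴ * T)).re := by
          rw [hVV]
          norm_num
  have htt : (Matrix.trace (Tᴴ * T)).re ≤ ∑ x, ∑ y, tnorm (K x * (K y)ᴴ) := by
    rw [Matrix.trace_mul_comm, hT, Matrix.conjTranspose_sum, Matrix.sum_mul,
      Matrix.trace_sum, Complex.re_sum]
    refine Finset.sum_le_sum fun x _ => ?_
    rw [Matrix.mul_sum, Matrix.trace_sum, Complex.re_sum]
    refine Finset.sum_le_sum fun y _ => ?_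
    obtain ⟨_, _, _, _, hbound⟩ := tnorm_key (K x * (K y)ᴴ)
    have harr : (C x * K x) * (C y * K y)ᴴ
        = ((C x * K x) * (K y)ᴴ) * (C y)ᴴ := by
      rw [Matrix.conjTranspose_mul]
      simp only [Matrix.mul_assoc]
    have htrarr : Matrix.trace ((C x * K x) * (C y * K y)ᴴ)
        = Matrix.trace (((C y)ᴴ * C x) * (K x * (K y)ᴴ)) := by
      rw [harr, Matrix.trace_mul_comm]
      congr 1
      simp only [Matrix.mul_assoc]
    rw [htrarr]
    exact hbound _ (((hC y).2.1).mul ((hC x).1))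
  -- final assembly
  have hfinal : (∑ x, tnorm (K x * V)) ^ 2 ≤ ∑ x, ∑ y, tnorm (K x * (K y)ᴴ) :=
    hTsum.trans htt
  calc ((1 : ℝ) / n) *
        (∑ x : Ω, fidelity ρ ((∑ α, v α • O x α) * ρ * (∑ α, v α • O x α)ᴴ)) ^ 2
      = (n : ℝ)⁻¹ * (∑ x, tnorm (K x * V)) ^ 2 := by
        rw [one_div]
        congr 2
        exact Finset.sum_congr rfl fun x _ => hfid1 x
    _ ≤ (n : ℝ)⁻¹ * ∑ x, ∑ y, tnorm (K x * (K y)ᴴ) :=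
        mul_le_mul_of_nonneg_left hfinal (inv_nonneg.mpr hn0.le)
    _ = ∑ x : Ω, ∑ y : Ω, fidelity ρ (Opair x y * ρ * (Opair x y)ᴴ) := by
        rw [Finset.mul_sum]
        refine Finset.sum_congr rfl fun x _ => ?_
        rw [Finset.mul_sum]
        exact Finset.sum_congr rfl fun y _ => (hfid2 x y).symm
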